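/- Let D be a division ring with center F and let a ∈ D. If for all b₁, …, bₙ ∈ D the identity Σ_{σ ∈ S_{n+1}} sign(σ) a^{σ(0)} b₁ a^{σ(1)} ⋯ bₙ a^{σ(n)} = 0 holds, then a is algebraic over F of degree at most n. -/

import Mathlib

section Aux

variable {D : Type*} [DivisionRing D]

/-- The Capelli-type alternating sum. -/
private def capS (n : ℕ) (u : Fin (n + 1) → D) (b : Fin n → D) : D :=
  ∑ σ : Equiv.Perm (Fin (n + 1)),
    (Equiv.Perm.sign σ : ℤ) •
      (u (σ 0) * (List.ofFn fun i : Fin n => b i * u (σ i.succ)).prod)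

/-- Linear independence over the center, phrased concretely. -/
private def cIndep {m : ℕ} (u : Fin m → D) : Prop :=
  ∀ c : Fin m → D, (∀ i, c i ∈ Subring.center D) → ∑ i, c i * u i = 0 → ∀ i, c i = 0

private lemma cIndep_castSucc {m : ℕ} {u : Fin (m + 1) → D} (h : cIndep u) :
    cIndep (fun i : Fin m => u i.castSucc) := by
  intro c hc hsum i
  have h0 : ((0 : D) ∈ Subring.center D) := Subring.zero_mem _
  have := h (Fin.snoc c 0) (fun j => by
      refine Fin.lastCases ?_ ?_ j <;> simp [hc, h0])
    (by rw [Fin.sum_univ_castSucc]; simpa using hsum) i.castSucc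
  simpa using this

private lemma cIndep_succ {m : ℕ} {u : Fin (m + 1) → D} (h : cIndep u) :
    cIndep (fun i : Fin m => u i.succ) := by
  intro c hc hsum i
  have := h (Fin.cons 0 c) (fun j => by
      refine Fin.cases ?_ ?_ j <;> simp [hc, Subring.zero_mem])
    (by rw [Fin.sum_univ_succ]; simpa using hsum) i.succ
  simpa using this

private lemma cIndep_ne_zero {m : ℕ} {u : Fin (m + 1) → D} (h : cIndep u) (i : Fin (m + 1)) :
    u i ≠ 0 := by
  intro hu
  have hc : ∀ j, (if j = i then (1 : D) else 0) ∈ Subring.center D := fun j => by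
    split
    · exact Subring.one_mem _
    · exact Subring.zero_mem _
  have hsum : ∑ j, (if j = i then (1 : D) else 0) * u j = 0 := by
    rw [Finset.sum_eq_single i (fun b _ hb => by simp [hb]) (by simp)]
    simp [hu]
  have := h _ hc hsum i
  simp at this

/-- Lemma A: a generalized identity `∑ uᵢ x dᵢ = 0` with `u` centrally independent
forces all `dᵢ = 0`. -/
private lemma lemA : ∀ (m : ℕ) (u d : Fin (m + 1) → D), cIndep u →
    (∀ x : D, ∑ i, u i * x * d i = 0) → ∀ i, d i = 0 := by
  intro m
  induction m with
  | zero =>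
    intro u d hu hx i
    have h1 := hx 1
    rw [Fin.sum_univ_one, mul_one] at h1
    have hu0 := cIndep_ne_zero hu 0
    have hd0 : d 0 = 0 := (mul_eq_zero.mp h1).resolve_left hu0
    have : i = 0 := Fin.fin_one_eq_zero i
    rw [this, hd0]
  | succ m ih =>
    intro u d hu hx
    set L : Fin (m + 2) := Fin.last (m + 1) with hL
    by_cases hdL : d L = 0
    · -- drop the last term and use the induction hypothesis
      have hx' : ∀ x : D, ∑ i : Fin (m + 1), u i.castSucc * x * d i.castSucc = 0 := by
        intro x
        have := hx x
        rw [Fin.sum_univ_castSucc] at this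
        simpa [show d (Fin.last (m + 1)) = 0 from hdL] using this
      have hall := ih (fun i => u i.castSucc) (fun i => d i.castSucc)
        (cIndep_castSucc hu) hx'
      intro i
      refine Fin.lastCases ?_ ?_ i
      · exact hdL
      · exact fun j => hall j
    · -- normalize so that the last coefficient is 1 and derive a contradiction
      exfalso
      set e : Fin (m + 2) → D := fun i => d i * (d L)⁻¹ with he
      have heL : e L = 1 := by simp [he, hdL]
      have hxe : ∀ x : D, ∑ i, u i * x * e i = 0 := by
        intro x
        have := congrArg (· * (d L)⁻¹) (hx x)
        simp only [Finset.sum_mul, zero_mul] at this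
        simpa [he, mul_assoc] using this
      have hcomm : ∀ i : Fin (m + 2), ∀ y : D, e i * y = y * e i := by
        have key : ∀ y : D, ∀ i : Fin (m + 1), e i.castSucc * y - y * e i.castSucc = 0 := by
          intro y
          have hXY : ∀ x : D, ∑ i, u i * x * (e i * y - y * e i) = 0 := by
            intro x
            have h1 := hxe (x * y)
            have h2 := congrArg (· * y) (hxe x)
            simp only [Finset.sum_mul, zero_mul] at h2
            calc ∑ i, u i * x * (e i * y - y * e i)
                = ∑ i, (u i * x * e i * y - u i * (x * y) * e i) := by
                  refine Finset.sum_congr rfl fun i _ => ?_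
                  simp only [mul_sub, mul_assoc]
              _ = (∑ i, u i * x * e i * y) - ∑ i, u i * (x * y) * e i :=
                  Finset.sum_sub_distrib _ _
              _ = 0 := by rw [h1, h2, sub_zero]
          have hXY' : ∀ x : D,
              ∑ i : Fin (m + 1), u i.castSucc * x * (e i.castSucc * y - y * e i.castSucc) = 0 := by
            intro x
            have := hXY x
            rw [Fin.sum_univ_castSucc] at this
            simpa [show e (Fin.last (m + 1)) = 1 from heL] using this
          exact ih (fun i => u i.castSucc)
            (fun i => e i.castSucc * y - y * e i.castSucc) (cIndep_castSucc hu) hXY'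
        intro i y
        refine Fin.lastCases ?_ ?_ i
        · rw [heL, one_mul, mul_one]
        · intro j
          exact sub_eq_zero.mp (key y j)
      have hcen : ∀ i, e i ∈ Subring.center D :=
        fun i => Subring.mem_center_iff.mpr fun y => (hcomm i y).symm
      have hsum : ∑ i, e i * u i = 0 := by
        have := hxe 1
        simp only [mul_one] at this
        calc ∑ i, e i * u i = ∑ i, u i * 1 * e i := by
              refine Finset.sum_congr rfl fun i _ => ?_
              rw [mul_one, (Subring.mem_center_iff.mp (hcen i) (u i)).symm]
        _ = 0 := hxe 1
      have := hu e hcen hsum L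
      rw [heL] at this
      exact one_ne_zero this

set_option maxRecDepth 8000 in
private lemma capS_succ (n : ℕ) (u : Fin (n + 2) → D) (b : Fin (n + 1) → D) :
    capS (n + 1) u b = ∑ p : Fin (n + 2),
      (if p = 0 then (1 : ℤ) else -1) •
        (u p * (b 0 *
          capS n (fun j => u (Equiv.swap 0 p j.succ)) (fun i => b i.succ))) := by
  rw [capS, ← Equiv.Perm.decomposeFin.symm.sum_comp, Fintype.sum_prod_type]
  refine Finset.sum_congr rfl fun p _ => ?_
  rw [capS, Finset.mul_sum, Finset.mul_sum, Finset.smul_sum]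
  refine Finset.sum_congr rfl fun e _ => ?_
  simp only [Equiv.Perm.decomposeFin.symm_sign, Equiv.Perm.decomposeFin_symm_apply_zero,
    Equiv.Perm.decomposeFin_symm_apply_succ, List.ofFn_succ, List.prod_cons,
    Units.val_mul, apply_ite (fun (z : ℤˣ) => (z : ℤ)), Units.val_one, Units.val_neg,
    mul_smul, mul_smul_comm, mul_assoc]

private lemma lemB : ∀ (n : ℕ) (u : Fin (n + 1) → D), cIndep u →
    ∃ b : Fin n → D, capS n u b ≠ 0 := by
  intro n
  induction n with
  | zero =>
    intro u hu
    refine ⟨fun i => i.elim0, ?_⟩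
    have h1 : ∀ σ : Equiv.Perm (Fin 1), σ = 1 := fun σ =>
      Equiv.ext fun i => Subsingleton.elim _ _
    have : capS 0 u (fun i => i.elim0) = u 0 := by
      rw [capS]
      calc ∑ σ : Equiv.Perm (Fin 1), (Equiv.Perm.sign σ : ℤ) •
            (u (σ 0) * (List.ofFn fun i : Fin 0 => i.elim0 * u (σ i.succ)).prod)
          = ∑ _σ : Equiv.Perm (Fin 1), u 0 := by
            refine Finset.sum_congr rfl fun σ _ => ?_
            rw [h1 σ]
            simp
        _ = u 0 := by simp
    rw [this]
    exact cIndep_ne_zero hu 0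
  | succ n ih =>
    intro u hu
    by_contra h
    push_neg at h
    obtain ⟨b', hb'⟩ := ih (fun j => u j.succ) (cIndep_succ hu)
    have key : ∀ x : D, ∑ p : Fin (n + 2), u p * x *
        ((if p = 0 then (1 : ℤ) else -1) •
          capS n (fun j => u (Equiv.swap 0 p j.succ)) b') = 0 := by
      intro x
      have h0 := h (Fin.cons x b')
      rw [capS_succ] at h0
      rw [← h0]
      refine Finset.sum_congr rfl fun p _ => ?_
      have hbs : (fun i : Fin n => (Fin.cons x b' : Fin (n + 1) → D) i.succ) = b' := by
        funext i; simp
      rw [hbs]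
      simp only [Fin.cons_zero, mul_smul_comm, mul_assoc]
    have hall := lemA (n + 1) u
      (fun p => (if p = 0 then (1 : ℤ) else -1) •
        capS n (fun j => u (Equiv.swap 0 p j.succ)) b') hu key 0
    apply hb'
    have hswap : (fun j : Fin (n + 1) => u (Equiv.swap (0 : Fin (n + 2)) 0 j.succ))
        = fun j => u j.succ := by
      funext j; rw [Equiv.swap_self]; rfl
    rw [← hswap]
    simpa using hall

end Aux

/-- If for all `b₁, …, bₙ ∈ D` the identity
`Σ_{σ ∈ S_{n+1}} sign(σ) a^{σ 0} b₁ a^{σ 1} ⋯ bₙ a^{σ n} = 0` holds, then `a` is algebraic of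
degree at most `n` over the center `F` of the division ring `D`. -/
theorem algebraic_of_degree_le_of_gPolynomial_vanish
    (D : Type*) [DivisionRing D] (n : ℕ) (a : D)
    (hvan : ∀ b : Fin n → D,
      ∑ σ : Equiv.Perm (Fin (n + 1)),
        (Equiv.Perm.sign σ : ℤ) •
          (a ^ ((σ 0 : Fin (n + 1)) : ℕ) *
            (List.ofFn fun i : Fin n => b i * a ^ ((σ i.succ : Fin (n + 1)) : ℕ)).prod) = 0) :
    ∃ p : Polynomial D, p ≠ 0 ∧ p.natDegree ≤ n ∧
      (∀ i, p.coeff i ∈ Subring.center D) ∧ Polynomial.eval a p = 0 := by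
  by_contra hcon
  have hind : cIndep (fun i : Fin (n + 1) => a ^ (i : ℕ)) := by
    intro c hc hsum
    by_contra hne
    push_neg at hne
    obtain ⟨i0, hi0⟩ := hne
    apply hcon
    refine ⟨∑ i : Fin (n + 1), Polynomial.monomial (i : ℕ) (c i), ?_, ?_, ?_, ?_⟩
    · intro h0
      have hco : (∑ i : Fin (n + 1), Polynomial.monomial (i : ℕ) (c i)).coeff (i0 : ℕ)
          = c i0 := by
        rw [Polynomial.finset_sum_coeff]
        rw [Finset.sum_eq_single i0
          (fun j _ hj => by
            rw [Polynomial.coeff_monomial, if_neg (fun hje => hj (Fin.ext hje))])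
          (by simp)]
        rw [Polynomial.coeff_monomial, if_pos rfl]
      rw [h0, Polynomial.coeff_zero] at hco
      exact hi0 hco.symm
    · refine Polynomial.natDegree_le_iff_degree_le.mpr ?_
      refine (Polynomial.degree_sum_le _ _).trans ?_
      refine Finset.sup_le fun j _ => ?_
      refine (Polynomial.degree_monomial_le _ _).trans ?_
      exact_mod_cast Nat.cast_le.mpr j.is_le
    · intro k
      rw [Polynomial.finset_sum_coeff]
      refine Subring.sum_mem _ fun j _ => ?_
      rw [Polynomial.coeff_monomial]
      split
      · exact hc j
      · exact Subring.zero_mem _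
    · rw [Polynomial.eval_finset_sum]
      simp only [Polynomial.eval_monomial]
      exact hsum
  obtain ⟨b, hb⟩ := lemB n (fun i : Fin (n + 1) => a ^ (i : ℕ)) hind
  exact hb (hvan b)
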